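/- arXiv:1402.0644 — 3 statements merged into one kernel-verified Lean document; each statement's English description precedes it below -/
import Mathlib

section
/- For 0 < s ≤ t ≤ 1/2, the Wasserstein distance between lazy random walks satisfies W_1(μ_x^s, μ_{x'}^s) = (s/t)·W_1(μ_x^t, μ_{x'}^t) + (1 − s/t)·d(x,x'). Consequently κ^t(x,x') := 1 − W_1(μ_x^t, μ_{x'}^t)/d(x,x') is linear in t for t ≤ 1/2, i.e. κ^s = (s/t)κ^t. -/
open Classical Filter
noncomputable section

/-- A coupling (transference plan) between two measures on `V`, given as
nonnegative density functions. -/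
def IsCoupling {V : Type*} (μ ν : V → ℝ) (ξ : V → V → ℝ) : Prop :=
  (∀ y y', 0 ≤ ξ y y') ∧ (∀ y, ∑' y', ξ y y' = μ y) ∧ (∀ y', ∑' y, ξ y y' = ν y')

/-- The 1-Wasserstein distance between `μ` and `ν` for the cost function `ρ`. -/
def W1 {V : Type*} (ρ : V → V → ℝ) (μ ν : V → ℝ) : ℝ :=
  sInf {c | ∃ ξ, IsCoupling μ ν ξ ∧
    HasSum (fun p : V × V => ξ p.1 p.2 * ρ p.1 p.2) c}

/-- The shortest-path distance of a graph, as a real number. -/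
def graphDist {V : Type*} (G : SimpleGraph V) (x y : V) : ℝ := G.dist x y

/-- The degree of a vertex. -/
def deg {V : Type*} (G : SimpleGraph V) (x : V) : ℕ := Nat.card {y | G.Adj x y}

/-- The Dirac measure at `x`. -/
def dirac {V : Type*} (x : V) : V → ℝ := fun y => if y = x then 1 else 0

/-- The lazy random walk `μ_x^t = (1-t)·δ_x + t·(uniform measure on the neighbors of x)`. -/
def lazyWalk {V : Type*} (G : SimpleGraph V) (t : ℝ) (x y : V) : ℝ :=
  if y = x then 1 - t else if G.Adj x y then t / (deg G x) else 0

/-- The coarse Ricci curvature `κ^t(x,x') = 1 - W₁(μ_x^t, μ_{x'}^t)/d(x,x')`. -/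
def kappa {V : Type*} (G : SimpleGraph V) (t : ℝ) (x x' : V) : ℝ :=
  1 - W1 (graphDist G) (lazyWalk G t x) (lazyWalk G t x') / graphDist G x x'

section Aux

variable {V : Type*} {G : SimpleGraph V}

lemma graphDist_nonneg (G : SimpleGraph V) (y y' : V) : 0 ≤ graphDist G y y' :=
  Nat.cast_nonneg _

lemma graphDist_self (G : SimpleGraph V) (y : V) : graphDist G y y = 0 := by
  simp [graphDist]

lemma one_le_graphDist (hconn : G.Connected) {y y' : V} (h : y ≠ y') :
    1 ≤ graphDist G y y' := by
  have := hconn.pos_dist_of_ne h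
  unfold graphDist
  exact_mod_cast this

lemma deg_eq_card {x : V} (hfin : (G.neighborSet x).Finite) :
    deg G x = hfin.toFinset.card := by
  rw [deg, show {y | G.Adj x y} = G.neighborSet x from rfl, Nat.card_coe_set_eq,
    Set.ncard_eq_toFinset_card _ hfin]

lemma deg_ne_zero (hconn : G.Connected) {x z : V} (hfin : (G.neighborSet x).Finite)
    (hxz : x ≠ z) : deg G x ≠ 0 := by
  obtain ⟨w⟩ := hconn.preconnected x z
  cases w with
  | nil => exact absurd rfl hxz
  | @cons _ b _ h p =>
    rw [deg_eq_card hfin]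
    simp only [ne_eq, Finset.card_eq_zero]
    intro hcard
    have hb : b ∈ hfin.toFinset := (Set.Finite.mem_toFinset _).2 h
    rw [hcard] at hb
    exact absurd hb (Finset.notMem_empty b)

lemma lazyWalk_self (G : SimpleGraph V) (t : ℝ) (x : V) : lazyWalk G t x x = 1 - t := by
  simp [lazyWalk]

lemma lazyWalk_nonneg {t : ℝ} (ht0 : 0 ≤ t) (ht1 : t ≤ 1) (x y : V) :
    0 ≤ lazyWalk G t x y := by
  unfold lazyWalk
  split
  · linarith
  · split
    · positivity
    · exact le_refl 0

lemma lazyWalk_eq_zero {x : V} (hfin : (G.neighborSet x).Finite) {t : ℝ} {y : V}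
    (hy : y ∉ insert x hfin.toFinset) : lazyWalk G t x y = 0 := by
  simp only [Finset.mem_insert, Set.Finite.mem_toFinset, SimpleGraph.mem_neighborSet,
    not_or] at hy
  simp [lazyWalk, hy.1, hy.2]

lemma lazyWalk_scale {a b : ℝ} (ha : a ≠ 0) (G : SimpleGraph V) {x y : V} (hy : y ≠ x) :
    lazyWalk G b x y = (b / a) * lazyWalk G a x y := by
  unfold lazyWalk
  rw [if_neg hy, if_neg hy]
  split
  · rw [div_mul_div_comm, mul_comm b a, mul_div_mul_left _ _ ha]
  · ring

lemma hasSum_lazyWalk {x : V} (hfin : (G.neighborSet x).Finite)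
    (hdeg : deg G x ≠ 0) (t : ℝ) : HasSum (lazyWalk G t x) 1 := by
  have hx : x ∉ hfin.toFinset := by
    simp [Set.Finite.mem_toFinset]
  have h : HasSum (lazyWalk G t x) (∑ y ∈ insert x hfin.toFinset, lazyWalk G t x y) :=
    hasSum_sum_of_ne_finset_zero
    (s := insert x hfin.toFinset) (f := lazyWalk G t x)
    (fun y hy => lazyWalk_eq_zero hfin hy)
  have hsum : ∑ y ∈ insert x hfin.toFinset, lazyWalk G t x y = 1 := by
    rw [Finset.sum_insert hx, lazyWalk_self]
    have hterm : ∀ y ∈ hfin.toFinset, lazyWalk G t x y = t / (deg G x) := by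
      intro y hy
      rw [Set.Finite.mem_toFinset] at hy
      have hadj : G.Adj x y := hy
      rw [lazyWalk, if_neg hadj.ne', if_pos hadj]
    rw [Finset.sum_congr rfl hterm, Finset.sum_const, nsmul_eq_mul, ← deg_eq_card hfin]
    have : (deg G x : ℝ) ≠ 0 := Nat.cast_ne_zero.2 hdeg
    field_simp
    ring
  rwa [hsum] at h

lemma summable_lazyWalk {x : V} (hfin : (G.neighborSet x).Finite)
    (hdeg : deg G x ≠ 0) (t : ℝ) : Summable (lazyWalk G t x) :=
  (hasSum_lazyWalk hfin hdeg t).summable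

/-- The coupling set is nonempty: the product coupling works. -/
lemma W1_set_nonempty {x x' : V} (hfinx : (G.neighborSet x).Finite)
    (hfinx' : (G.neighborSet x').Finite) (hdx : deg G x ≠ 0) (hdx' : deg G x' ≠ 0)
    {a : ℝ} (ha0 : 0 ≤ a) (ha1 : a ≤ 1) :
    ({c | ∃ ξ, IsCoupling (lazyWalk G a x) (lazyWalk G a x') ξ ∧
      HasSum (fun p : V × V => ξ p.1 p.2 * graphDist G p.1 p.2) c}).Nonempty := by
  set ξ : V → V → ℝ := fun y y' => lazyWalk G a x y * lazyWalk G a x' y' with hξdef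
  have hsupp : ∀ p : V × V,
      p ∉ (insert x hfinx.toFinset) ×ˢ (insert x' hfinx'.toFinset) →
      ξ p.1 p.2 * graphDist G p.1 p.2 = 0 := by
    rintro ⟨y, y'⟩ hp
    rw [Finset.mem_product, not_and_or] at hp
    rcases hp with hp | hp
    · rw [hξdef]; simp [lazyWalk_eq_zero hfinx hp]
    · rw [hξdef]; simp [lazyWalk_eq_zero hfinx' hp]
  have hsummable : Summable (fun p : V × V => ξ p.1 p.2 * graphDist G p.1 p.2) :=
    summable_of_ne_finset_zero hsupp
  refine ⟨_, ξ, ⟨?_, ?_, ?_⟩, hsummable.hasSum⟩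
  · intro y y'
    exact mul_nonneg (lazyWalk_nonneg ha0 ha1 _ _) (lazyWalk_nonneg ha0 ha1 _ _)
  · intro y
    rw [hξdef]
    simp only
    rw [tsum_mul_left, (hasSum_lazyWalk hfinx' hdx' a).tsum_eq, mul_one]
  · intro y'
    rw [hξdef]
    simp only
    rw [tsum_mul_right, (hasSum_lazyWalk hfinx hdx a).tsum_eq, one_mul]

end Aux

section Transform
variable {V : Type*} {G : SimpleGraph V}

/-- Transform an `a`-coupling into a `b`-coupling, moving the diagonal mass. -/
lemma coupling_transform {x x' : V}
    {a b c : ℝ} (ha : 0 < a) (ha1 : a < 1) (hb0 : 0 ≤ b)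
    {ξ : V → V → ℝ} (hξ : IsCoupling (lazyWalk G a x) (lazyWalk G a x') ξ)
    (hc : HasSum (fun p : V × V => ξ p.1 p.2 * graphDist G p.1 p.2) c)
    (hpos : 0 ≤ (b / a) * ξ x x' + (1 - b / a)) :
    ∃ ξ', IsCoupling (lazyWalk G b x) (lazyWalk G b x') ξ' ∧
      HasSum (fun p : V × V => ξ' p.1 p.2 * graphDist G p.1 p.2)
        ((b / a) * c + (1 - b / a) * graphDist G x x') := by
  obtain ⟨hnn, hrow, hcol⟩ := hξ
  have ha' : a ≠ 0 := ne_of_gt ha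
  set ξ' : V → V → ℝ :=
    fun y y' => (b / a) * ξ y y' + (1 - b / a) * (if y = x ∧ y' = x' then 1 else 0)
      with hξ'def
  have hrowx : HasSum (ξ x) (1 - a) := by
    have h := hrow x
    rw [lazyWalk_self] at h
    have hsumm : Summable (ξ x) := by
      by_contra hn
      rw [tsum_eq_zero_of_not_summable hn] at h
      linarith
    exact h ▸ hsumm.hasSum
  have hcolx : HasSum (fun y => ξ y x') (1 - a) := by
    have h := hcol x'
    rw [lazyWalk_self] at h
    have hsumm : Summable (fun y => ξ y x') := by
      by_contra hn
      rw [tsum_eq_zero_of_not_summable hn] at h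
      linarith
    exact h ▸ hsumm.hasSum
  refine ⟨ξ', ⟨?_, ?_, ?_⟩, ?_⟩
  · -- nonnegativity
    intro y y'
    by_cases h : y = x ∧ y' = x'
    · obtain ⟨rfl, rfl⟩ := h
      simpa [hξ'def] using hpos
    · have : (if y = x ∧ y' = x' then (1:ℝ) else 0) = 0 := if_neg h
      rw [hξ'def]
      simp only [this, mul_zero, add_zero]
      exact mul_nonneg (div_nonneg hb0 ha.le) (hnn y y')
  · -- row marginals
    intro y
    by_cases hy : y = x
    · subst hy
      have hfe : (fun y' => ξ' y y')
          = fun y' => (b / a) * ξ y y' + (if y' = x' then (1 - b / a) else 0) := by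
        funext y'
        by_cases hyy : y' = x' <;> simp [hξ'def, hyy]
      have h3 := (hrowx.mul_left (b / a)).add (hasSum_ite_eq x' (1 - b / a))
      rw [hfe, h3.tsum_eq, lazyWalk_self]
      field_simp
      ring
    · have hfe : (fun y' => ξ' y y') = fun y' => (b / a) * ξ y y' := by
        funext y'
        simp [hξ'def, hy]
      rw [hfe, tsum_mul_left, hrow y]
      exact (lazyWalk_scale ha' G hy).symm
  · -- column marginals
    intro y'
    by_cases hy' : y' = x'
    · subst hy'
      have hfe : (fun y => ξ' y y')
          = fun y => (b / a) * ξ y y' + (if y = x then (1 - b / a) else 0) := by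
        funext y
        by_cases hyy : y = x <;> simp [hξ'def, hyy]
      have h3 := (hcolx.mul_left (b / a)).add (hasSum_ite_eq x (1 - b / a))
      rw [hfe, h3.tsum_eq, lazyWalk_self]
      field_simp
      ring
    · have hfe : (fun y => ξ' y y') = fun y => (b / a) * ξ y y' := by
        funext y
        simp [hξ'def, hy']
      rw [hfe, tsum_mul_left, hcol y']
      exact (lazyWalk_scale ha' G hy').symm
  · -- cost
    have hfe : (fun p : V × V => ξ' p.1 p.2 * graphDist G p.1 p.2)
        = fun p : V × V => (b / a) * (ξ p.1 p.2 * graphDist G p.1 p.2)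
            + (if p = (x, x') then (1 - b / a) * graphDist G x x' else 0) := by
      funext p
      obtain ⟨y, y'⟩ := p
      by_cases h : y = x ∧ y' = x'
      · obtain ⟨rfl, rfl⟩ := h
        have e1 : ξ' y y' = (b / a) * ξ y y' + (1 - b / a) := by simp [hξ'def]
        rw [e1, if_pos rfl]
        ring
      · have h2 : ¬ ((y, y') = (x, x')) := by
          simp only [Prod.mk.injEq]
          exact h
        simp only [hξ'def, if_neg h, if_neg h2]
        ring
    rw [hfe]
    exact (hc.mul_left (b / a)).add (hasSum_ite_eq (x, x') _)

end Transform

section Diag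
variable {V : Type*} {G : SimpleGraph V}

/-- Any coupling of the lazy walks puts mass at least `1 - 2a` on `(x, x')`. -/
lemma diag_lb (hconn : G.Connected) {x x' : V}
    (hfinx : (G.neighborSet x).Finite) (hdx : deg G x ≠ 0)
    {a c : ℝ} (ha : 0 < a) (ha1 : a < 1)
    {ξ : V → V → ℝ} (hξ : IsCoupling (lazyWalk G a x) (lazyWalk G a x') ξ)
    (hc : HasSum (fun p : V × V => ξ p.1 p.2 * graphDist G p.1 p.2) c) :
    1 - 2 * a ≤ ξ x x' := by
  obtain ⟨hnn, hrow, hcol⟩ := hξ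
  have hcost : Summable (fun p : V × V => ξ p.1 p.2 * graphDist G p.1 p.2) := hc.summable
  -- each row is summable
  have hrowsum : ∀ y, Summable (ξ y) := by
    intro y
    have h1 : Summable (fun y' => ξ y y' * graphDist G y y') :=
      hcost.comp_injective (i := fun y' => (y, y'))
        (fun u v h => by simpa using congrArg Prod.snd h)
    have h2 : Summable (fun y' => ξ y y' * graphDist G y y'
        + (if y' = y then ξ y y else 0)) :=
      h1.add (hasSum_ite_eq y (ξ y y)).summable
    refine Summable.of_nonneg_of_le (fun y' => hnn y y') (fun y' => ?_) h2
    by_cases hyy : y' = y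
    · subst hyy
      rw [graphDist_self, mul_zero, zero_add, if_pos rfl]
    · rw [if_neg hyy, add_zero]
      exact le_mul_of_one_le_right (hnn y y') (one_le_graphDist hconn (Ne.symm hyy))
  -- the column at x' is summable
  have hcolx : Summable (fun y => ξ y x') := by
    have h1 : Summable (fun y => ξ y x' * graphDist G y x') :=
      hcost.comp_injective (i := fun y => (y, x'))
        (fun u v h => by simpa using congrArg Prod.fst h)
    have h2 : Summable (fun y => ξ y x' * graphDist G y x'
        + (if y = x' then ξ x' x' else 0)) :=
      h1.add (hasSum_ite_eq x' (ξ x' x')).summable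
    refine Summable.of_nonneg_of_le (fun y => hnn y x') (fun y => ?_) h2
    by_cases hyy : y = x'
    · subst hyy
      rw [graphDist_self, mul_zero, zero_add, if_pos rfl]
    · rw [if_neg hyy, add_zero]
      exact le_mul_of_one_le_right (hnn y x') (one_le_graphDist hconn hyy)
  -- each entry of the column is at most the row mass
  have hterm : ∀ y, ξ y x' ≤ lazyWalk G a x y := by
    intro y
    rw [← hrow y]
    exact Summable.le_tsum (hrowsum y) x' (fun j _ => hnn y j)
  -- split off the (x, x') entry of the column
  have hcolval : ∑' y, ξ y x' = 1 - a := by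
    rw [hcol x', lazyWalk_self]
  have hsplit := Summable.tsum_eq_add_tsum_ite hcolx x
  have hμ : Summable (lazyWalk G a x) := summable_lazyWalk hfinx hdx a
  have hμsplit := Summable.tsum_eq_add_tsum_ite hμ x
  rw [(hasSum_lazyWalk hfinx hdx a).tsum_eq, lazyWalk_self] at hμsplit
  have hrest : ∑' y, (if y = x then 0 else ξ y x')
      ≤ ∑' y, (if y = x then 0 else lazyWalk G a x y) := by
    refine Summable.tsum_le_tsum (fun y => ?_) ?_ ?_
    · by_cases hy : y = x
      · simp [hy]
      · rw [if_neg hy, if_neg hy]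
        exact hterm y
    · refine Summable.of_nonneg_of_le (fun y => ?_) (fun y => ?_) hcolx
      · by_cases hy : y = x <;> simp [hy, hnn]
      · by_cases hy : y = x <;> simp [hy, hnn]
    · refine Summable.of_nonneg_of_le (fun y => ?_) (fun y => ?_) hμ
      · by_cases hy : y = x <;>
          simp [hy, lazyWalk_nonneg ha.le ha1.le]
      · by_cases hy : y = x <;>
          simp [hy, lazyWalk_nonneg ha.le ha1.le]
  rw [hcolval] at hsplit
  linarith
end Diag

/-- for `0 < s ≤ t ≤ 1/2`, the Wasserstein distance between lazy
random walks interpolates linearly, and hence `κ^t` is linear in `t`. -/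
theorem W1_scaling_and_kappa_linear {V : Type*} (G : SimpleGraph V)
    (hconn : G.Connected) (hfin : ∀ v, (G.neighborSet v).Finite)
    (x x' : V) (hne : x ≠ x') (s t : ℝ) (hs : 0 < s) (hst : s ≤ t) (ht : t ≤ 1/2) :
    W1 (graphDist G) (lazyWalk G s x) (lazyWalk G s x')
      = (s/t) * W1 (graphDist G) (lazyWalk G t x) (lazyWalk G t x')
        + (1 - s/t) * graphDist G x x' ∧
    kappa G s x x' = (s/t) * kappa G t x x' := by
  have ht0 : 0 < t := lt_of_lt_of_le hs hst
  have hs1 : s < 1 := by linarith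
  have ht1 : t < 1 := by linarith
  have hfx := hfin x
  have hfx' := hfin x'
  have hdx : deg G x ≠ 0 := deg_ne_zero hconn hfx hne
  have hdx' : deg G x' ≠ 0 := deg_ne_zero hconn hfx' (Ne.symm hne)
  have hd1 : (1:ℝ) ≤ graphDist G x x' := one_le_graphDist hconn hne
  set d := graphDist G x x' with hd
  set A := {c | ∃ ξ, IsCoupling (lazyWalk G s x) (lazyWalk G s x') ξ ∧
    HasSum (fun p : V × V => ξ p.1 p.2 * graphDist G p.1 p.2) c} with hA
  set B := {c | ∃ ξ, IsCoupling (lazyWalk G t x) (lazyWalk G t x') ξ ∧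
    HasSum (fun p : V × V => ξ p.1 p.2 * graphDist G p.1 p.2) c} with hB
  have hWs : W1 (graphDist G) (lazyWalk G s x) (lazyWalk G s x') = sInf A := rfl
  have hWt : W1 (graphDist G) (lazyWalk G t x) (lazyWalk G t x') = sInf B := rfl
  have hAne : A.Nonempty := W1_set_nonempty hfx hfx' hdx hdx' hs.le (by linarith)
  have hBne : B.Nonempty := W1_set_nonempty hfx hfx' hdx hdx' ht0.le (by linarith)
  have hAbdd : BddBelow A := by
    refine ⟨0, fun c hc => ?_⟩
    obtain ⟨ξ, hξ, hsum⟩ := hc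
    have h0 : 0 ≤ ∑' p : V × V, ξ p.1 p.2 * graphDist G p.1 p.2 := tsum_nonneg
      (fun p : V × V => mul_nonneg (hξ.1 p.1 p.2) (graphDist_nonneg G p.1 p.2))
    rwa [hsum.tsum_eq] at h0
  have hBbdd : BddBelow B := by
    refine ⟨0, fun c hc => ?_⟩
    obtain ⟨ξ, hξ, hsum⟩ := hc
    have h0 : 0 ≤ ∑' p : V × V, ξ p.1 p.2 * graphDist G p.1 p.2 := tsum_nonneg
      (fun p : V × V => mul_nonneg (hξ.1 p.1 p.2) (graphDist_nonneg G p.1 p.2))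
    rwa [hsum.tsum_eq] at h0
  have key1 : ∀ c ∈ B, sInf A ≤ (s/t) * c + (1 - s/t) * d := by
    rintro c ⟨ξ, hξ, hc⟩
    have hpos : 0 ≤ (s/t) * ξ x x' + (1 - s/t) := by
      have h1 : 0 ≤ (s/t) * ξ x x' := mul_nonneg (div_nonneg hs.le ht0.le) (hξ.1 x x')
      have h2 : s/t ≤ 1 := (div_le_one ht0).2 hst
      linarith
    obtain ⟨ξ', hξ', hc'⟩ := coupling_transform ht0 ht1 hs.le hξ hc hpos
    exact csInf_le hAbdd ⟨ξ', hξ', hc'⟩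
  have key2 : ∀ c ∈ A, (s/t) * sInf B + (1 - s/t) * d ≤ c := by
    rintro c ⟨ξ, hξ, hc⟩
    have hdiag := diag_lb hconn hfx hdx hs hs1 hξ hc
    have hst' : 2 * s ≤ s / t := by
      rw [le_div_iff₀ ht0]
      nlinarith [mul_nonneg hs.le (by linarith : (0:ℝ) ≤ 1 - 2 * t)]
    have hpos : 0 ≤ (t/s) * ξ x x' + (1 - t/s) := by
      have h1 : 1 - s/t ≤ ξ x x' := by linarith
      have h2 := mul_le_mul_of_nonneg_left h1 (le_of_lt (div_pos ht0 hs))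
      have e : (t/s) * (1 - s/t) = t/s - 1 := by field_simp
      linarith
    obtain ⟨ξ', hξ', hc'⟩ := coupling_transform hs hs1 ht0.le hξ hc hpos
    have hle : sInf B ≤ (t/s) * c + (1 - t/s) * d := csInf_le hBbdd ⟨ξ', hξ', hc'⟩
    have h2 := mul_le_mul_of_nonneg_left hle (le_of_lt (div_pos hs ht0))
    have e : (s/t) * ((t/s) * c + (1 - t/s) * d) = c + (s/t - 1) * d := by
      field_simp
    linarith
  have hge : (s/t) * sInf B + (1 - s/t) * d ≤ sInf A := le_csInf hAne key2
  have hle : sInf A ≤ (s/t) * sInf B + (1 - s/t) * d := by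
    have h1 : ∀ c ∈ B, (t/s) * (sInf A - (1 - s/t) * d) ≤ c := by
      intro c hc
      have h := key1 c hc
      have h2 := mul_le_mul_of_nonneg_left
        (sub_le_sub_right h ((1 - s/t) * d)) (le_of_lt (div_pos ht0 hs))
      have e : (t/s) * ((s/t) * c + (1 - s/t) * d - (1 - s/t) * d) = c := by
        field_simp
        ring
      linarith
    have h3 := le_csInf hBne h1
    have h4 := mul_le_mul_of_nonneg_left h3 (le_of_lt (div_pos hs ht0))
    have e : (s/t) * ((t/s) * (sInf A - (1 - s/t) * d)) = sInf A - (1 - s/t) * d := by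
      field_simp
    linarith
  have hmain : sInf A = (s/t) * sInf B + (1 - s/t) * d := le_antisymm hle hge
  have hd0 : d ≠ 0 := by linarith
  constructor
  · rw [hWs, hWt]
    exact hmain
  · rw [kappa, kappa, hWs, hWt, ← hd, hmain]
    field_simp
    ring
end
end

section
/- On the graph of the cube (3-regular, girth 4), the Ollivier–Ricci curvature of every edge equals 2/3, and this is sharp for the discrete Myers theorem: the diameter of the cube graph equals 3 = 2/(2/3). -/
open Classical Filter
noncomputable section

/-- The 1-skeleton of the cube: vertices are `{0,1}³`, adjacent iff they differ
in exactly one coordinate. -/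
def cubeGraph : SimpleGraph (Fin 3 → Bool) where
  Adj u v := ∃ i, u i ≠ v i ∧ ∀ j, j ≠ i → u j = v j
  symm := by
    constructor
    rintro u v ⟨i, hi, h⟩
    exact ⟨i, hi.symm, fun j hj => (h j hj).symm⟩
  loopless := by constructor; rintro u ⟨i, hi, -⟩; exact hi rfl

/-! ### Auxiliary material -/

namespace CubeAux

open Finset

abbrev V3 := Fin 3 → Bool

instance adjDec : DecidableRel cubeGraph.Adj := fun u v =>
  inferInstanceAs (Decidable (∃ i, u i ≠ v i ∧ ∀ j, j ≠ i → u j = v j))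

/-- Flip the coordinates where `x` and `x'` differ. -/
def flipc (x x' y : V3) : V3 := fun j => if x j = x' j then y j else !y j

lemma flipc_flipc (x x' y : V3) : flipc x x' (flipc x x' y) = y := by
  funext j; simp only [flipc]; by_cases h : x j = x' j <;> simp [h]

lemma flipc_self_right (x x' : V3) : flipc x x' x' = x := by
  funext j; simp only [flipc]
  by_cases h : x j = x' j
  · simp [h]
  · simp [h]; revert h; cases x j <;> cases x' j <;> simp

lemma flipc_self_left (x x' : V3) : flipc x x' x = x' := by
  funext j; simp only [flipc]
  by_cases h : x j = x' j
  · simp [h]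
  · simp [h]; revert h; cases x j <;> cases x' j <;> simp

lemma adj_iff_hamming : ∀ u v : V3, cubeGraph.Adj u v ↔ hammingDist u v = 1 := by decide

lemma hamming_flipc : ∀ x x' y : V3, cubeGraph.Adj x x' → hammingDist y (flipc x x' y) = 1 := by
  decide

lemma adj_flipc : ∀ x x' y : V3, cubeGraph.Adj x x' →
    (cubeGraph.Adj x (flipc x x' y) ↔ cubeGraph.Adj x' y) := by decide

lemma card_nbrs_ne : ∀ x x' : V3, cubeGraph.Adj x x' →
    (univ.filter fun y => cubeGraph.Adj x y ∧ y ≠ x').card = 2 := by decide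

lemma sum_hamming_nbrs : ∀ x x' : V3, cubeGraph.Adj x x' →
    ∑ y ∈ univ.filter (fun y => cubeGraph.Adj x y), hammingDist y x' = 4 := by decide

lemma sum_hamming_nbrs_self : ∀ x' : V3,
    ∑ y ∈ univ.filter (fun y => cubeGraph.Adj x' y), hammingDist y x' = 3 := by decide

lemma card_nbrs : ∀ x : V3, (univ.filter fun y => cubeGraph.Adj x y).card = 3 := by decide

/-- Walks realizing the Hamming distance. -/
lemma exists_walk : ∀ (n : ℕ) (u v : V3), hammingDist u v = n →
    ∃ p : cubeGraph.Walk u v, p.length = n := by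
  intro n
  induction n with
  | zero =>
    intro u v h
    rw [hammingDist_eq_zero] at h
    subst h
    exact ⟨SimpleGraph.Walk.nil, rfl⟩
  | succ n ih =>
    intro u v h
    have hpos : 0 < (univ.filter fun i => u i ≠ v i).card := by
      rw [show (univ.filter fun i => u i ≠ v i).card = hammingDist u v from rfl, h]
      omega
    obtain ⟨i, hi⟩ := Finset.card_pos.mp hpos
    rw [Finset.mem_filter] at hi
    set u' : V3 := Function.update u i (v i) with hu'
    have hadj : cubeGraph.Adj u u' := by
      refine ⟨i, ?_, ?_⟩
      · simp [hu', Function.update_self]; exact hi.2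
      · intro j hj; simp [hu', Function.update_of_ne hj]
    have hham : hammingDist u' v = n := by
      have hfe : (univ.filter fun j => u' j ≠ v j) = (univ.filter fun j => u j ≠ v j).erase i := by
        ext j
        simp only [Finset.mem_filter, Finset.mem_erase, Finset.mem_univ, true_and]
        by_cases hj : j = i
        · subst hj; simp [hu', Function.update_self]
        · simp [hu', Function.update_of_ne hj, hj]
      have : hammingDist u' v = ((univ.filter fun j => u j ≠ v j).erase i).card := by
        rw [show hammingDist u' v = (univ.filter fun j => u' j ≠ v j).card from rfl, hfe]
      rw [this, Finset.card_erase_of_mem (by simp [hi.2]),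
        show (univ.filter fun j => u j ≠ v j).card = hammingDist u v from rfl, h]
      omega
    obtain ⟨p, hp⟩ := ih u' v hham
    exact ⟨SimpleGraph.Walk.cons hadj p, by simp [hp]⟩

lemma hamming_le_walk {u v : V3} (p : cubeGraph.Walk u v) : hammingDist u v ≤ p.length := by
  induction p with
  | nil => simp
  | @cons a b c hab p ih =>
    have h1 : hammingDist a b = 1 := (adj_iff_hamming a b).mp hab
    calc hammingDist a c ≤ hammingDist a b + hammingDist b c := hammingDist_triangle a b c
    _ ≤ 1 + p.length := by rw [h1]; omega
    _ = (SimpleGraph.Walk.cons hab p).length := by simp [add_comm]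

lemma cube_dist (u v : V3) : cubeGraph.dist u v = hammingDist u v := by
  refine le_antisymm ?_ ?_
  · obtain ⟨p, hp⟩ := exists_walk (hammingDist u v) u v rfl
    simpa [hp] using SimpleGraph.dist_le p
  · obtain ⟨p, hp⟩ := exists_walk (hammingDist u v) u v rfl
    obtain ⟨q, hq⟩ := SimpleGraph.Reachable.exists_walk_length_eq_dist ⟨p⟩
    rw [← hq]
    exact hamming_le_walk q

lemma graphDist_eq (u v : V3) : graphDist cubeGraph u v = (hammingDist u v : ℝ) := by
  rw [graphDist, cube_dist]

lemma deg_cube (x : V3) : deg cubeGraph x = 3 := by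
  rw [deg, Nat.card_eq_fintype_card]
  rw [show Fintype.card {y | cubeGraph.Adj x y} = Fintype.card {y // cubeGraph.Adj x y} from rfl,
    Fintype.card_subtype]
  exact card_nbrs x

lemma lazy_eq (t : ℝ) (x y : V3) :
    lazyWalk cubeGraph t x y
      = (if y = x then 1 - t else 0) + (if cubeGraph.Adj x y then t / 3 else 0) := by
  rw [lazyWalk, deg_cube]
  by_cases h : y = x
  · subst h; simp [cubeGraph.irrefl]
  · simp [h]

/-- The optimal coupling. -/
def xi (x x' : V3) (t : ℝ) (y y' : V3) : ℝ :=
  (if y = x ∧ y' = x' then 1 - 4*t/3 else 0)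
  + (if y = x ∧ y' = x then t/3 else 0)
  + (if y = x' ∧ y' = x' then t/3 else 0)
  + (if (cubeGraph.Adj x y ∧ y ≠ x') ∧ y' = flipc x x' y then t/3 else 0)

end CubeAux
namespace CubeAux
open Finset

variable {x x' : V3} {t : ℝ}

lemma xi_nonneg (hadj : cubeGraph.Adj x x') (ht : 0 < t) (ht' : t ≤ 3/4) :
    ∀ y y', 0 ≤ xi x x' t y y' := by
  intro y y'
  unfold xi
  have h1 : (0:ℝ) ≤ 1 - 4*t/3 := by linarith
  have h2 : (0:ℝ) ≤ t/3 := by linarith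
  apply add_nonneg; apply add_nonneg; apply add_nonneg
  all_goals split_ifs <;> simp [h1, h2]

lemma xi_row (hadj : cubeGraph.Adj x x') (y : V3) :
    ∑ y' : V3, xi x x' t y y' = lazyWalk cubeGraph t x y := by
  have hne : x ≠ x' := cubeGraph.ne_of_adj hadj
  unfold xi
  rw [Finset.sum_add_distrib, Finset.sum_add_distrib, Finset.sum_add_distrib]
  have e1 : ∑ y' : V3, (if y = x ∧ y' = x' then 1 - 4*t/3 else 0) =
      if y = x then 1 - 4*t/3 else 0 := by
    by_cases h : y = x <;> simp [h]
  have e2 : ∑ y' : V3, (if y = x ∧ y' = x then t/3 else 0) = if y = x then t/3 else 0 := by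
    by_cases h : y = x <;> simp [h]
  have e3 : ∑ y' : V3, (if y = x' ∧ y' = x' then t/3 else 0) = if y = x' then t/3 else 0 := by
    by_cases h : y = x' <;> simp [h]
  have e4 : ∑ y' : V3, (if (cubeGraph.Adj x y ∧ y ≠ x') ∧ y' = flipc x x' y then t/3 else 0) =
      if cubeGraph.Adj x y ∧ y ≠ x' then t/3 else 0 := by
    by_cases h : cubeGraph.Adj x y ∧ y ≠ x' <;> simp [h]
  rw [e1, e2, e3, e4, lazy_eq]
  by_cases h1 : y = x
  · subst h1
    simp [hne, cubeGraph.irrefl]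
    ring
  · by_cases h2 : y = x'
    · subst h2
      simp [h1, hadj]
    · simp [h1, h2]

lemma xi_col (hadj : cubeGraph.Adj x x') (y' : V3) :
    ∑ y : V3, xi x x' t y y' = lazyWalk cubeGraph t x' y' := by
  have hne : x ≠ x' := cubeGraph.ne_of_adj hadj
  have hadj' : cubeGraph.Adj x' x := hadj.symm
  unfold xi
  rw [Finset.sum_add_distrib, Finset.sum_add_distrib, Finset.sum_add_distrib]
  have e1 : ∑ y : V3, (if y = x ∧ y' = x' then 1 - 4*t/3 else 0) =
      if y' = x' then 1 - 4*t/3 else 0 := by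
    by_cases h : y' = x' <;> simp [h]
  have e2 : ∑ y : V3, (if y = x ∧ y' = x then t/3 else 0) = if y' = x then t/3 else 0 := by
    by_cases h : y' = x <;> simp [h]
  have e3 : ∑ y : V3, (if y = x' ∧ y' = x' then t/3 else 0) = if y' = x' then t/3 else 0 := by
    by_cases h : y' = x' <;> simp [h]
  have e4 : ∑ y : V3, (if (cubeGraph.Adj x y ∧ y ≠ x') ∧ y' = flipc x x' y then t/3 else 0) =
      if cubeGraph.Adj x' y' ∧ y' ≠ x then t/3 else 0 := by
    have hiff : ∀ y : V3, (y' = flipc x x' y) ↔ (y = flipc x x' y') := by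
      intro y
      constructor
      · intro h; rw [h, flipc_flipc]
      · intro h; rw [h, flipc_flipc]
    simp only [hiff]
    rw [Finset.sum_eq_single (flipc x x' y')]
    · have hA : cubeGraph.Adj x (flipc x x' y') ↔ cubeGraph.Adj x' y' :=
        adj_flipc x x' y' hadj
      have hB : flipc x x' y' ≠ x' ↔ y' ≠ x := by
        constructor
        · intro h h'; apply h; rw [h']; exact flipc_self_left x x'
        · intro h h'
          apply h
          have := congrArg (flipc x x') h'
          rwa [flipc_flipc, flipc_self_right] at this
      by_cases h : cubeGraph.Adj x' y' ∧ y' ≠ x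
      · simp [hA.mpr h.1, hB.mpr h.2, h]
      · simp only [h, if_false]
        rw [if_neg]
        intro hc
        exact h ⟨hA.mp hc.1.1, hB.mp hc.1.2⟩
    · intro b _ hb
      rw [if_neg]
      intro hc
      exact hb hc.2
    · intro h; exact absurd (Finset.mem_univ _) h
  rw [e1, e2, e3, e4, lazy_eq]
  by_cases h1 : y' = x'
  · subst h1
    simp [hne.symm, cubeGraph.irrefl]
    ring
  · by_cases h2 : y' = x
    · subst h2
      simp [h1, hadj']
    · simp [h1, h2]

lemma xi_cost (hadj : cubeGraph.Adj x x') :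
    ∑ p : V3 × V3, xi x x' t p.1 p.2 * graphDist cubeGraph p.1 p.2 = 1 - 2*t/3 := by
  have hne : x ≠ x' := cubeGraph.ne_of_adj hadj
  rw [Fintype.sum_prod_type]
  have inner : ∀ y : V3, ∑ y' : V3, xi x x' t y y' * graphDist cubeGraph y y'
      = (if y = x then (1 - 4*t/3) * graphDist cubeGraph x x' else 0)
        + (if cubeGraph.Adj x y ∧ y ≠ x' then t/3 else 0) := by
    intro y
    unfold xi
    simp only [add_mul, ite_mul, zero_mul]
    rw [Finset.sum_add_distrib, Finset.sum_add_distrib, Finset.sum_add_distrib]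
    have e1 : ∑ y' : V3, (if y = x ∧ y' = x' then (1 - 4*t/3) * graphDist cubeGraph y y' else 0)
        = if y = x then (1 - 4*t/3) * graphDist cubeGraph x x' else 0 := by
      by_cases h : y = x <;> simp [h]
    have e2 : ∑ y' : V3, (if y = x ∧ y' = x then t/3 * graphDist cubeGraph y y' else 0)
        = 0 := by
      by_cases h : y = x <;>
        simp [h, graphDist_eq, hammingDist_self]
    have e3 : ∑ y' : V3, (if y = x' ∧ y' = x' then t/3 * graphDist cubeGraph y y' else 0)
        = 0 := by
      by_cases h : y = x' <;>
        simp [h, graphDist_eq, hammingDist_self]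
    have e4 : ∑ y' : V3, (if (cubeGraph.Adj x y ∧ y ≠ x') ∧ y' = flipc x x' y then
          t/3 * graphDist cubeGraph y y' else 0)
        = if cubeGraph.Adj x y ∧ y ≠ x' then t/3 else 0 := by
      by_cases h : cubeGraph.Adj x y ∧ y ≠ x' <;>
        simp [h, graphDist_eq, hamming_flipc x x' y hadj]
    rw [e1, e2, e3, e4]
    ring
  rw [Finset.sum_congr rfl (fun y _ => inner y), Finset.sum_add_distrib]
  have d1 : graphDist cubeGraph x x' = 1 := by
    rw [graphDist_eq, (adj_iff_hamming x x').mp hadj]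
    norm_num
  have s1 : ∑ y : V3, (if y = x then (1 - 4*t/3) * graphDist cubeGraph x x' else 0)
      = 1 - 4*t/3 := by
    simp [d1]
  have s2 : ∑ y : V3, (if cubeGraph.Adj x y ∧ y ≠ x' then t/3 else 0) = 2 * (t/3) := by
    rw [← Finset.sum_filter, Finset.sum_const, card_nbrs_ne x x' hadj]
    simp [nsmul_eq_mul]
  rw [s1, s2]
  ring

end CubeAux
namespace CubeAux
open Finset

variable {x x' : V3} {t : ℝ}

lemma sum_f_mu (hadj : cubeGraph.Adj x x') :
    ∑ y : V3, (hammingDist y x' : ℝ) * lazyWalk cubeGraph t x y = (1 - t) + 4 * (t/3) := by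
  have h1 : hammingDist x x' = 1 := (adj_iff_hamming x x').mp hadj
  simp only [lazy_eq, mul_add]
  rw [Finset.sum_add_distrib]
  have e1 : ∑ y : V3, (hammingDist y x' : ℝ) * (if y = x then 1 - t else 0) = 1 - t := by
    rw [Finset.sum_eq_single x]
    · simp [h1]
    · intro b _ hb; simp [hb]
    · intro h; exact absurd (Finset.mem_univ _) h
  have e2 : ∑ y : V3, (hammingDist y x' : ℝ) * (if cubeGraph.Adj x y then t/3 else 0)
      = 4 * (t/3) := by
    have : ∀ y : V3, (hammingDist y x' : ℝ) * (if cubeGraph.Adj x y then t/3 else 0)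
        = if cubeGraph.Adj x y then (hammingDist y x' : ℝ) * (t/3) else 0 := by
      intro y; split_ifs <;> simp
    rw [Finset.sum_congr rfl (fun y _ => this y), ← Finset.sum_filter, ← Finset.sum_mul]
    have : ∑ y ∈ univ.filter (fun y => cubeGraph.Adj x y), (hammingDist y x' : ℝ) = 4 := by
      rw [← Nat.cast_sum, sum_hamming_nbrs x x' hadj]; norm_num
    rw [this]
  rw [e1, e2]

lemma sum_f_nu (hadj : cubeGraph.Adj x x') :
    ∑ y : V3, (hammingDist y x' : ℝ) * lazyWalk cubeGraph t x' y = 3 * (t/3) := by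
  simp only [lazy_eq, mul_add]
  rw [Finset.sum_add_distrib]
  have e1 : ∑ y : V3, (hammingDist y x' : ℝ) * (if y = x' then 1 - t else 0) = 0 := by
    rw [Finset.sum_eq_single x']
    · simp [hammingDist_self]
    · intro b _ hb; simp [hb]
    · intro h; exact absurd (Finset.mem_univ _) h
  have e2 : ∑ y : V3, (hammingDist y x' : ℝ) * (if cubeGraph.Adj x' y then t/3 else 0)
      = 3 * (t/3) := by
    have : ∀ y : V3, (hammingDist y x' : ℝ) * (if cubeGraph.Adj x' y then t/3 else 0)
        = if cubeGraph.Adj x' y then (hammingDist y x' : ℝ) * (t/3) else 0 := by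
      intro y; split_ifs <;> simp
    rw [Finset.sum_congr rfl (fun y _ => this y), ← Finset.sum_filter, ← Finset.sum_mul]
    have : ∑ y ∈ univ.filter (fun y => cubeGraph.Adj x' y), (hammingDist y x' : ℝ) = 3 := by
      rw [← Nat.cast_sum, sum_hamming_nbrs_self x']; norm_num
    rw [this]
  rw [e1, e2, zero_add]

lemma lower_bound (hadj : cubeGraph.Adj x x')
    (ξ : V3 → V3 → ℝ)
    (hc : IsCoupling (lazyWalk cubeGraph t x) (lazyWalk cubeGraph t x') ξ) :
    1 - 2*t/3 ≤ ∑ p : V3 × V3, ξ p.1 p.2 * graphDist cubeGraph p.1 p.2 := by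
  obtain ⟨hpos, hrow, hcol⟩ := hc
  have hrow' : ∀ y, ∑ y' : V3, ξ y y' = lazyWalk cubeGraph t x y := by
    intro y; rw [← tsum_fintype (L := SummationFilter.unconditional _)]; exact hrow y
  have hcol' : ∀ y', ∑ y : V3, ξ y y' = lazyWalk cubeGraph t x' y' := by
    intro y'; rw [← tsum_fintype (L := SummationFilter.unconditional _)]; exact hcol y'
  have key : ∑ p : V3 × V3, ξ p.1 p.2 * ((hammingDist p.1 x' : ℝ) - (hammingDist p.2 x' : ℝ))
      ≤ ∑ p : V3 × V3, ξ p.1 p.2 * graphDist cubeGraph p.1 p.2 := by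
    apply Finset.sum_le_sum
    intro p _
    apply mul_le_mul_of_nonneg_left _ (hpos p.1 p.2)
    rw [graphDist_eq]
    have := hammingDist_triangle p.1 p.2 x'
    have h2 := hammingDist_comm p.2 x'
    push_cast
    have : (hammingDist p.1 x' : ℝ) ≤ hammingDist p.1 p.2 + hammingDist p.2 x' := by
      exact_mod_cast this
    linarith
  refine le_trans ?_ key
  have expand : ∑ p : V3 × V3, ξ p.1 p.2 * ((hammingDist p.1 x' : ℝ) - (hammingDist p.2 x' : ℝ))
      = (∑ y : V3, (hammingDist y x' : ℝ) * lazyWalk cubeGraph t x y)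
        - ∑ y' : V3, (hammingDist y' x' : ℝ) * lazyWalk cubeGraph t x' y' := by
    rw [Fintype.sum_prod_type]
    simp only [mul_sub]
    simp only [Finset.sum_sub_distrib]
    congr 1
    · apply Finset.sum_congr rfl
      intro y _
      rw [← hrow' y, Finset.mul_sum]
      apply Finset.sum_congr rfl
      intro y' _; ring
    · rw [Finset.sum_comm]
      apply Finset.sum_congr rfl
      intro y' _
      rw [← hcol' y', Finset.mul_sum]
      apply Finset.sum_congr rfl
      intro y _; ring
  rw [expand, sum_f_mu hadj, sum_f_nu hadj]
  ring_nf
  linarith [le_refl (0:ℝ)]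

lemma W1_eq (hadj : cubeGraph.Adj x x') (ht : 0 < t) (ht' : t ≤ 3/4) :
    W1 (graphDist cubeGraph) (lazyWalk cubeGraph t x) (lazyWalk cubeGraph t x') = 1 - 2*t/3 := by
  set S := {c | ∃ ξ, IsCoupling (lazyWalk cubeGraph t x) (lazyWalk cubeGraph t x') ξ ∧
    HasSum (fun p : V3 × V3 => ξ p.1 p.2 * graphDist cubeGraph p.1 p.2) c} with hS
  have hmem : (1 - 2*t/3) ∈ S := by
    refine ⟨xi x x' t, ⟨xi_nonneg hadj ht ht', ?_, ?_⟩, ?_⟩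
    · intro y; rw [tsum_fintype]; exact xi_row hadj y
    · intro y'; rw [tsum_fintype]; exact xi_col hadj y'
    · have := hasSum_fintype (fun p : V3 × V3 => xi x x' t p.1 p.2 * graphDist cubeGraph p.1 p.2)
      rwa [xi_cost hadj] at this
  have hlb : ∀ c ∈ S, 1 - 2*t/3 ≤ c := by
    rintro c ⟨ξ, hξ, hsum⟩
    have := (hasSum_fintype (fun p : V3 × V3 => ξ p.1 p.2 * graphDist cubeGraph p.1 p.2)).unique hsum
    rw [← this]
    exact lower_bound hadj ξ hξ
  rw [W1]
  exact le_antisymm (csInf_le ⟨1 - 2*t/3, hlb⟩ hmem) (le_csInf ⟨_, hmem⟩ hlb)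

lemma kappa_eq (hadj : cubeGraph.Adj x x') (ht : 0 < t) (ht' : t ≤ 3/4) :
    kappa cubeGraph t x x' = 2*t/3 := by
  have d1 : graphDist cubeGraph x x' = 1 := by
    rw [graphDist_eq, (adj_iff_hamming x x').mp hadj]; norm_num
  rw [kappa, W1_eq hadj ht ht', d1]
  ring

end CubeAux
/-- on the cube graph, the Ollivier–Ricci curvature of every edge
equals `2/3`, sharp for the discrete Myers theorem: the diameter equals `3`. -/
theorem cube_ric_and_diameter :
    (∀ x x', cubeGraph.Adj x x' →
      Filter.Tendsto (fun t => kappa cubeGraph t x x' / t)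
        (nhdsWithin 0 (Set.Ioi 0)) (nhds (2/3))) ∧
    (∃ x y, cubeGraph.dist x y = 3) ∧ (∀ x y, cubeGraph.dist x y ≤ 3) := by
  refine ⟨?_, ?_, ?_⟩
  · intro x x' hadj
    have heq : ∀ᶠ t in nhdsWithin (0:ℝ) (Set.Ioi 0),
        (fun t => kappa cubeGraph t x x' / t) t = 2/3 := by
      filter_upwards [Ioo_mem_nhdsGT_of_mem (by norm_num : (0:ℝ) ∈ Set.Ico 0 (3/4))]
      intro t ht
      have h1 : (0:ℝ) < t := ht.1
      have h2 : t ≤ 3/4 := le_of_lt ht.2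
      rw [CubeAux.kappa_eq hadj h1 h2]
      field_simp
    exact Filter.Tendsto.congr' (heq.mono fun t h => h.symm) tendsto_const_nhds
  · refine ⟨fun _ => false, fun _ => true, ?_⟩
    rw [CubeAux.cube_dist]
    decide
  · intro x y
    rw [CubeAux.cube_dist]
    calc hammingDist x y ≤ Fintype.card (Fin 3) := hammingDist_le_card_fintype
    _ = 3 := by simp
end
end

section
/- On the hexagonal (honeycomb) tiling graph, the Ollivier–Ricci curvature of every edge equals −2/3. -/
open Classical Filter
noncomputable section

/-- The hexagonal (honeycomb) lattice in "brick wall" coordinates on `ℤ × ℤ`: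
each vertex `(i,j)` is adjacent to its horizontal neighbors `(i±1,j)`, and has
one vertical edge, upwards if `i+j` is even, downwards otherwise.  This graph
is 3-regular, bipartite, of girth 6. -/
def hexGraph : SimpleGraph (ℤ × ℤ) where
  Adj u v := (u.2 = v.2 ∧ (u.1 = v.1 + 1 ∨ v.1 = u.1 + 1)) ∨
    (u.1 = v.1 ∧ ((Even (u.1 + u.2) ∧ v.2 = u.2 + 1) ∨ (Even (v.1 + v.2) ∧ u.2 = v.2 + 1)))
  symm := by
    constructor
    rintro u v (⟨h1, h2⟩ | ⟨h1, h2⟩)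
    · exact Or.inl ⟨h1.symm, h2.symm⟩
    · exact Or.inr ⟨h1.symm, h2.symm⟩
  loopless := ⟨by rintro ⟨a, b⟩ (⟨-, h | h⟩ | ⟨-, ⟨-, h⟩ | ⟨-, h⟩⟩) <;> omega⟩



open SimpleGraph

lemma hex_adj (u v : ℤ × ℤ) : hexGraph.Adj u v ↔
    ((u.2 = v.2 ∧ (u.1 = v.1 + 1 ∨ v.1 = u.1 + 1)) ∨
    (u.1 = v.1 ∧ ((Even (u.1 + u.2) ∧ v.2 = u.2 + 1) ∨ (Even (v.1 + v.2) ∧ u.2 = v.2 + 1)))) :=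
  Iff.rfl

lemma hex_adj_right (i j : ℤ) : hexGraph.Adj (i, j) (i+1, j) := Or.inl ⟨rfl, Or.inr rfl⟩

lemma hex_reach_up (i j : ℤ) : hexGraph.Reachable (i, j) (i, j+1) := by
  rcases Int.even_or_odd (i + j) with he | ho
  · exact SimpleGraph.Adj.reachable (Or.inr ⟨rfl, Or.inl ⟨he, rfl⟩⟩)
  · have h1 : hexGraph.Adj (i, j) (i+1, j) := hex_adj_right i j
    have h2 : hexGraph.Adj (i+1, j) (i+1, j+1) := by
      refine Or.inr ⟨rfl, Or.inl ⟨?_, rfl⟩⟩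
      rw [Int.odd_iff] at ho
      simp only [Int.even_iff]; omega
    have h3 : hexGraph.Adj (i+1, j+1) (i, j+1) := Or.inl ⟨rfl, Or.inl rfl⟩
    exact (h1.reachable.trans h2.reachable).trans h3.reachable

lemma hex_reach00 (i j : ℤ) : hexGraph.Reachable (0, 0) (i, j) := by
  have hrow : ∀ i : ℤ, hexGraph.Reachable (0, 0) (i, (0:ℤ)) := by
    intro i
    induction i using Int.induction_on with
    | zero => exact Reachable.refl _
    | succ k ih => exact ih.trans (hex_adj_right k 0).reachable
    | pred k ih =>
      have h := (hex_adj_right (-(k:ℤ)-1) 0).symm.reachable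
      rw [show -(k:ℤ)-1+1 = -k by ring] at h
      exact ih.trans h
  have hcol : ∀ j : ℤ, hexGraph.Reachable (i, (0:ℤ)) (i, j) := by
    intro j
    induction j using Int.induction_on with
    | zero => exact Reachable.refl _
    | succ k ih => exact ih.trans (hex_reach_up i k)
    | pred k ih =>
      have h := (hex_reach_up i (-(k:ℤ)-1)).symm
      rw [show -(k:ℤ)-1+1 = -k by ring] at h
      exact ih.trans h
  exact (hrow i).trans (hcol j)

lemma hex_connected : hexGraph.Connected := by
  rw [connected_iff]
  exact ⟨fun u v => ((hex_reach00 u.1 u.2).symm.trans (hex_reach00 v.1 v.2)), ⟨(0,0)⟩⟩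

lemma hex_edge_parity {u v : ℤ × ℤ} (h : hexGraph.Adj u v) :
    (u.1 + u.2 + v.1 + v.2) % 2 = 1 := by
  rw [hex_adj] at h
  simp only [Int.even_iff] at h
  rcases h with ⟨h1, h2 | h2⟩ | ⟨h1, ⟨h2, h3⟩ | ⟨h2, h3⟩⟩ <;> omega

lemma hex_walk_parity {u v : ℤ × ℤ} (p : hexGraph.Walk u v) :
    (p.length : ℤ) % 2 = (u.1 + u.2 + v.1 + v.2) % 2 := by
  induction p with
  | nil => simp; omega
  | cons h p ih =>
    rw [SimpleGraph.Walk.length_cons]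
    have := hex_edge_parity h
    push_cast
    omega

lemma hex_dist_parity (u v : ℤ × ℤ) :
    ((hexGraph.dist u v : ℤ)) % 2 = (u.1 + u.2 + v.1 + v.2) % 2 := by
  obtain ⟨p, hp⟩ := hex_connected.exists_walk_length_eq_dist u v
  rw [← hp]; exact hex_walk_parity p

lemma hex_dist_eq_two {u v : ℤ × ℤ} (hne : u ≠ v) (w : ℤ × ℤ)
    (h1 : hexGraph.Adj u w) (h2 : hexGraph.Adj w v) : hexGraph.dist u v = 2 := by
  have hle : hexGraph.dist u v ≤ 2 := by
    have := SimpleGraph.dist_le (SimpleGraph.Walk.cons h1 h2.toWalk)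
    simpa using this
  have hpar := hex_dist_parity u v
  have e1 := hex_edge_parity h1
  have e2 := hex_edge_parity h2
  have hpos : 0 < hexGraph.dist u v := hex_connected.pos_dist_of_ne hne
  omega

lemma hex_dist_eq_three {u v : ℤ × ℤ} (hadj : ¬ hexGraph.Adj u v) (a b : ℤ × ℤ)
    (h1 : hexGraph.Adj u a) (h2 : hexGraph.Adj a b) (h3 : hexGraph.Adj b v) :
    hexGraph.dist u v = 3 := by
  have hle : hexGraph.dist u v ≤ 3 := by
    have := SimpleGraph.dist_le (SimpleGraph.Walk.cons h1 (SimpleGraph.Walk.cons h2 h3.toWalk))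
    simpa using this
  have hpar := hex_dist_parity u v
  have e1 := hex_edge_parity h1
  have e2 := hex_edge_parity h2
  have e3 := hex_edge_parity h3
  have h1' : hexGraph.dist u v ≠ 1 := fun hd => hadj (SimpleGraph.dist_eq_one_iff_adj.mp hd)
  omega

lemma hex_nbhd_even {i j : ℤ} (h : Even (i + j)) :
    {y | hexGraph.Adj (i, j) y} = ({((i+1:ℤ), j), ((i-1:ℤ), j), (i, (j+1:ℤ))} : Set (ℤ × ℤ)) := by
  rw [Int.even_iff] at h
  ext ⟨a, b⟩
  simp only [hex_adj, Set.mem_setOf_eq, Set.mem_insert_iff, Set.mem_singleton_iff,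
    Prod.mk.injEq, Int.even_iff]
  omega

lemma hex_nbhd_odd {i j : ℤ} (h : ¬ Even (i + j)) :
    {y | hexGraph.Adj (i, j) y} = ({((i+1:ℤ), j), ((i-1:ℤ), j), (i, (j-1:ℤ))} : Set (ℤ × ℤ)) := by
  rw [Int.even_iff] at h
  ext ⟨a, b⟩
  simp only [hex_adj, Set.mem_setOf_eq, Set.mem_insert_iff, Set.mem_singleton_iff,
    Prod.mk.injEq, Int.even_iff]
  omega

lemma hex_deg (v : ℤ × ℤ) : deg hexGraph v = 3 := by
  obtain ⟨i, j⟩ := v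
  rw [deg, Nat.card_coe_set_eq]
  by_cases h : Even (i + j)
  · rw [hex_nbhd_even h, Set.ncard_eq_three]
    exact ⟨_, _, _, by simp [Prod.ext_iff] <;> omega, by simp [Prod.ext_iff] <;> omega,
      by simp [Prod.ext_iff] <;> omega, rfl⟩
  · rw [hex_nbhd_odd h, Set.ncard_eq_three]
    exact ⟨_, _, _, by simp [Prod.ext_iff] <;> omega, by simp [Prod.ext_iff] <;> omega,
      by simp [Prod.ext_iff] <;> omega, rfl⟩


section Generic
variable {V : Type*}

/-- point mass on the product space -/
private lemma pm_row_hasSum (p : V × V) (c : ℝ) (u : V) :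
    HasSum (fun v => if (u, v) = p then c else 0) (if u = p.1 then c else 0) := by
  classical
  obtain ⟨p1, p2⟩ := p
  by_cases h : u = p1
  · subst h
    have e : (fun v => if ((u, v) : V × V) = (u, p2) then c else 0)
        = fun v => if v = p2 then c else 0 := by
      funext v; simp [Prod.ext_iff]
    rw [e, if_pos rfl]
    exact hasSum_ite_eq p2 c
  · have e : (fun v => if ((u, v) : V × V) = (p1, p2) then c else 0)
        = fun _ => (0 : ℝ) := by
      funext v; simp [Prod.ext_iff, h]
    rw [e, if_neg h]
    exact hasSum_zero
private lemma pm_col_hasSum (p : V × V) (c : ℝ) (v : V) :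
    HasSum (fun u => if (u, v) = p then c else 0) (if v = p.2 then c else 0) := by
  classical
  obtain ⟨p1, p2⟩ := p
  by_cases h : v = p2
  · subst h
    have e : (fun u => if ((u, v) : V × V) = (p1, v) then c else 0)
        = fun u => if u = p1 then c else 0 := by
      funext u; simp [Prod.ext_iff]
    rw [e, if_pos rfl]
    exact hasSum_ite_eq p1 c
  · have e : (fun u => if ((u, v) : V × V) = (p1, p2) then c else 0)
        = fun _ => (0 : ℝ) := by
      funext u; simp [Prod.ext_iff, h]
    rw [e, if_neg h]
    exact hasSum_zero

private lemma ite_mul_eq {α : Type*} (p q : α × α) (c : ℝ) (ρ : α → α → ℝ)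
    [Decidable (q = p)] :
    (if q = p then c else 0) * ρ q.1 q.2 = if q = p then c * ρ p.1 p.2 else 0 := by
  split_ifs with h
  · rw [h]
  · exact zero_mul _

set_option maxHeartbeats 2000000 in
lemma kappa_edge (G : SimpleGraph V) (hc : G.Connected)
    (x x' y1 y2 z1 z2 : V)
    (hxx' : G.Adj x x')
    (hNx : {y | G.Adj x y} = {x', y1, y2})
    (hNx' : {y | G.Adj x' y} = {x, z1, z2})
    (hy12 : y1 ≠ y2) (hz12 : z1 ≠ z2)
    (hy1x' : y1 ≠ x') (hy2x' : y2 ≠ x')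
    (hz1x : z1 ≠ x) (hz2x : z2 ≠ x)
    (dy1x' : G.dist y1 x' = 2) (dy2x' : G.dist y2 x' = 2)
    (d11 : G.dist y1 z1 = 3) (d12 : G.dist y1 z2 = 3)
    (d21 : G.dist y2 z1 = 3) (d22 : G.dist y2 z2 = 3)
    (hdegx : deg G x = 3) (hdegx' : deg G x' = 3)
    {t : ℝ} (ht0 : 0 < t) (ht1 : t ≤ 3/4) :
    kappa G t x x' = -(2/3) * t := by
  classical
  -- derived adjacencies
  have hxy1 : G.Adj x y1 := by
    have : y1 ∈ {y | G.Adj x y} := by rw [hNx]; simp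
    exact this
  have hxy2 : G.Adj x y2 := by
    have : y2 ∈ {y | G.Adj x y} := by rw [hNx]; simp
    exact this
  have hx'z1 : G.Adj x' z1 := by
    have : z1 ∈ {y | G.Adj x' y} := by rw [hNx']; simp
    exact this
  have hx'z2 : G.Adj x' z2 := by
    have : z2 ∈ {y | G.Adj x' y} := by rw [hNx']; simp
    exact this
  have hxne : x ≠ x' := hxx'.ne
  have hxy1ne : x ≠ y1 := hxy1.ne
  have hxy2ne : x ≠ y2 := hxy2.ne
  have hx'z1ne : x' ≠ z1 := hx'z1.ne
  have hx'z2ne : x' ≠ z2 := hx'z2.ne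
  -- measures
  set μ : V → ℝ := lazyWalk G t x with hμdef
  set ν : V → ℝ := lazyWalk G t x' with hνdef
  have hdeg3 : ((deg G x : ℝ)) = 3 := by rw [hdegx]; norm_num
  have hdeg3' : ((deg G x' : ℝ)) = 3 := by rw [hdegx']; norm_num
  have hμx : μ x = 1 - t := by simp [hμdef, lazyWalk]
  have hμx' : μ x' = t / 3 := by
    rw [hμdef, lazyWalk, if_neg (Ne.symm hxne), if_pos hxx', hdeg3]
  have hμy1 : μ y1 = t / 3 := by
    rw [hμdef, lazyWalk, if_neg (Ne.symm hxy1ne), if_pos hxy1, hdeg3]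
  have hμy2 : μ y2 = t / 3 := by
    rw [hμdef, lazyWalk, if_neg (Ne.symm hxy2ne), if_pos hxy2, hdeg3]
  have hμ0 : ∀ u, u ≠ x → u ≠ x' → u ≠ y1 → u ≠ y2 → μ u = 0 := by
    intro u h1 h2 h3 h4
    rw [hμdef, lazyWalk, if_neg h1, if_neg]
    intro had
    have : u ∈ ({x', y1, y2} : Set V) := by rw [← hNx]; exact had
    simp only [Set.mem_insert_iff, Set.mem_singleton_iff] at this
    tauto
  have hνx' : ν x' = 1 - t := by simp [hνdef, lazyWalk]
  have hνx : ν x = t / 3 := by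
    rw [hνdef, lazyWalk, if_neg hxne, if_pos hxx'.symm, hdeg3']
  have hνz1 : ν z1 = t / 3 := by
    rw [hνdef, lazyWalk, if_neg (Ne.symm hx'z1ne), if_pos hx'z1, hdeg3']
  have hνz2 : ν z2 = t / 3 := by
    rw [hνdef, lazyWalk, if_neg (Ne.symm hx'z2ne), if_pos hx'z2, hdeg3']
  have hν0 : ∀ u, u ≠ x → u ≠ x' → u ≠ z1 → u ≠ z2 → ν u = 0 := by
    intro u h1 h2 h3 h4
    rw [hνdef, lazyWalk, if_neg h2, if_neg]
    intro had
    have : u ∈ ({x, z1, z2} : Set V) := by rw [← hNx']; exact had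
    simp only [Set.mem_insert_iff, Set.mem_singleton_iff] at this
    tauto
  -- the potential
  set f : V → ℝ := fun v => ((min (G.dist y1 v) (G.dist y2 v) : ℕ) : ℝ) - 1 with hfdef
  have hlip : ∀ u v : V, f v - f u ≤ graphDist G u v := by
    intro u v
    have h1 := hc.dist_triangle (u := y1) (v := u) (w := v)
    have h2 := hc.dist_triangle (u := y2) (v := u) (w := v)
    have h3 : min (G.dist y1 v) (G.dist y2 v) ≤
        min (G.dist y1 u) (G.dist y2 u) + G.dist u v := by omega
    have h4 : ((min (G.dist y1 v) (G.dist y2 v) : ℕ) : ℝ) ≤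
        ((min (G.dist y1 u) (G.dist y2 u) : ℕ) : ℝ) + (G.dist u v : ℝ) := by exact_mod_cast h3
    simp only [hfdef, graphDist]
    linarith
  have hdy1x : G.dist y1 x = 1 := dist_eq_one_iff_adj.mpr hxy1.symm
  have hdy2x : G.dist y2 x = 1 := dist_eq_one_iff_adj.mpr hxy2.symm
  have hfx : f x = 0 := by simp only [hfdef]; rw [hdy1x, hdy2x]; norm_num
  have hfx' : f x' = 1 := by simp only [hfdef]; rw [dy1x', dy2x']; norm_num
  have hfy1 : f y1 = -1 := by simp only [hfdef]; rw [SimpleGraph.dist_self]; simp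
  have hfy2 : f y2 = -1 := by
    simp only [hfdef]; rw [SimpleGraph.dist_self (v := y2)]; simp
  have hfz1 : f z1 = 2 := by simp only [hfdef]; rw [d11, d21]; norm_num
  have hfz2 : f z2 = 2 := by simp only [hfdef]; rw [d12, d22]; norm_num
  -- the distance values
  have hρxx' : graphDist G x x' = 1 := by
    rw [graphDist, dist_eq_one_iff_adj.mpr hxx']; norm_num
  have hρxx : graphDist G x x = 0 := by rw [graphDist, SimpleGraph.dist_self]; norm_num
  have hρx'x' : graphDist G x' x' = 0 := by rw [graphDist, SimpleGraph.dist_self]; norm_num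
  have hρ11 : graphDist G y1 z1 = 3 := by rw [graphDist, d11]; norm_num
  have hρ22 : graphDist G y2 z2 = 3 := by rw [graphDist, d22]; norm_num
  have hρnn : ∀ u v : V, 0 ≤ graphDist G u v := by
    intro u v; rw [graphDist]; positivity
  have hρ1 : ∀ u v : V, u ≠ v → (1:ℝ) ≤ graphDist G u v := by
    intro u v huv
    rw [graphDist]
    exact_mod_cast Nat.one_le_cast.mpr (hc.pos_dist_of_ne huv)
  -- the explicit coupling (upper bound)
  set ξ₀ : V → V → ℝ := fun u v =>
    (if (u, v) = (x, x) then t/3 else 0) + ((if (u, v) = (x, x') then 1 - 4*t/3 else 0) +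
    ((if (u, v) = (x', x') then t/3 else 0) + ((if (u, v) = (y1, z1) then t/3 else 0) +
    (if (u, v) = (y2, z2) then t/3 else 0)))) with hξ₀def
  have hξ₀nn : ∀ u v, 0 ≤ ξ₀ u v := by
    intro u v
    simp only [hξ₀def]
    have : (0:ℝ) ≤ 1 - 4*t/3 := by linarith
    positivity
  have hξ₀row : ∀ u, HasSum (fun v => ξ₀ u v) (μ u) := by
    intro u
    have H := ((pm_row_hasSum (x, x) (t/3) u).add ((pm_row_hasSum (x, x') (1 - 4*t/3) u).add
      ((pm_row_hasSum (x', x') (t/3) u).add ((pm_row_hasSum (y1, z1) (t/3) u).add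
      (pm_row_hasSum (y2, z2) (t/3) u)))))
    convert H using 1
    by_cases h1 : u = x
    · subst h1; rw [hμx]; simp [hxne, hxy1ne, hxy2ne]; ring
    · by_cases h2 : u = x'
      · subst h2; rw [hμx']
        simp [h1, Ne.symm hy1x', Ne.symm hy2x']
      · by_cases h3 : u = y1
        · subst h3; rw [hμy1]; simp [h1, h2, hy12]
        · by_cases h4 : u = y2
          · subst h4; rw [hμy2]; simp [h1, h2, Ne.symm hy12]
          · rw [hμ0 u h1 h2 h3 h4]; simp [h1, h2, h3, h4]
  have hξ₀col : ∀ v, HasSum (fun u => ξ₀ u v) (ν v) := by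
    intro v
    have H := ((pm_col_hasSum (x, x) (t/3) v).add ((pm_col_hasSum (x, x') (1 - 4*t/3) v).add
      ((pm_col_hasSum (x', x') (t/3) v).add ((pm_col_hasSum (y1, z1) (t/3) v).add
      (pm_col_hasSum (y2, z2) (t/3) v)))))
    convert H using 1
    by_cases h1 : v = x
    · subst h1; rw [hνx]; simp [hxne, Ne.symm hz1x, Ne.symm hz2x]
    · by_cases h2 : v = x'
      · subst h2; rw [hνx']; simp [h1, hx'z1ne, hx'z2ne]; ring
      · by_cases h3 : v = z1
        · subst h3; rw [hνz1]; simp [h1, h2, hz12]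
        · by_cases h4 : v = z2
          · subst h4; rw [hνz2]; simp [h1, h2, Ne.symm hz12]
          · rw [hν0 v h1 h2 h3 h4]; simp [h1, h2, h3, h4]
  have hξ₀cost : HasSum (fun p : V × V => ξ₀ p.1 p.2 * graphDist G p.1 p.2)
      (1 + 2/3 * t) := by
    have e : (fun p : V × V => ξ₀ p.1 p.2 * graphDist G p.1 p.2) = fun p =>
      (if p = (x, x) then t/3 * graphDist G x x else 0) +
      ((if p = (x, x') then (1 - 4*t/3) * graphDist G x x' else 0) +
      ((if p = (x', x') then t/3 * graphDist G x' x' else 0) +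
      ((if p = (y1, z1) then t/3 * graphDist G y1 z1 else 0) +
      (if p = (y2, z2) then t/3 * graphDist G y2 z2 else 0)))) := by
      funext p
      obtain ⟨u, v⟩ := p
      simp only [hξ₀def, add_mul, ite_mul_eq]
    rw [e]
    have H := ((hasSum_ite_eq ((x, x) : V × V) (t/3 * graphDist G x x)).add
      ((hasSum_ite_eq ((x, x') : V × V) ((1 - 4*t/3) * graphDist G x x')).add
      ((hasSum_ite_eq ((x', x') : V × V) (t/3 * graphDist G x' x')).add
      ((hasSum_ite_eq ((y1, z1) : V × V) (t/3 * graphDist G y1 z1)).add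
      (hasSum_ite_eq ((y2, z2) : V × V) (t/3 * graphDist G y2 z2))))))
    convert H using 1
    rw [hρxx, hρxx', hρx'x', hρ11, hρ22]
    ring
  -- the lower bound
  have hzx1 : x ≠ z1 := fun e => hz1x e.symm
  have hzx2 : x ≠ z2 := fun e => hz2x e.symm
  have hlow : ∀ c ∈ {c | ∃ ξ, IsCoupling μ ν ξ ∧
      HasSum (fun p : V × V => ξ p.1 p.2 * graphDist G p.1 p.2) c}, 1 + 2/3 * t ≤ c := by
    rintro c ⟨ξ, ⟨hξnn, hrow, hcol⟩, hcost⟩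
    have hcs := hcost.summable
    have hrowcost : ∀ u, Summable (fun v => ξ u v * graphDist G u v) := fun u =>
      hcs.prod_factor u
    have hcolcost : ∀ v, Summable (fun u => ξ u v * graphDist G u v) := by
      intro v
      have hi : Function.Injective (fun u : V => ((u, v) : V × V)) := by
        intro a b hab; simpa using congrArg Prod.fst hab
      exact hcs.comp_injective hi
    have hrowsum : ∀ u, Summable (fun v => ξ u v) := by
      intro u
      refine Summable.of_nonneg_of_le (fun v => hξnn u v) (fun v => ?_)
        ((hrowcost u).add (hasSum_ite_eq u (ξ u u)).summable)
      by_cases hv : v = u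
      · subst hv
        rw [if_pos rfl]
        nlinarith [mul_nonneg (hξnn v v) (hρnn v v)]
      · rw [if_neg hv]
        have h1 := hρ1 u v (fun e => hv e.symm)
        nlinarith [hξnn u v]
    have hcolsum : ∀ v, Summable (fun u => ξ u v) := by
      intro v
      refine Summable.of_nonneg_of_le (fun u => hξnn u v) (fun u => ?_)
        ((hcolcost v).add (hasSum_ite_eq v (ξ v v)).summable)
      by_cases hv : u = v
      · subst hv
        rw [if_pos rfl]
        nlinarith [mul_nonneg (hξnn u u) (hρnn u u)]
      · rw [if_neg hv]
        have h1 := hρ1 u v hv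
        nlinarith [hξnn u v]
    have rowHasSum : ∀ u, HasSum (fun v => ξ u v) (μ u) := fun u =>
      (hrow u) ▸ (hrowsum u).hasSum
    have colHasSum : ∀ v, HasSum (fun u => ξ u v) (ν v) := fun v =>
      (hcol v) ▸ (hcolsum v).hasSum
    have rowzero : ∀ u, μ u = 0 → ∀ v, ξ u v = 0 := by
      intro u hu v
      have hle := Summable.le_tsum (hrowsum u) v (fun j _ => hξnn u j)
      rw [hrow u, hu] at hle
      linarith [hξnn u v]
    have colzero : ∀ v, ν v = 0 → ∀ u, ξ u v = 0 := by
      intro v hv u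
      have hle := Summable.le_tsum (hcolsum v) u (fun j _ => hξnn j v)
      rw [hcol v, hv] at hle
      linarith [hξnn u v]
    have hTfib : ∀ v₀ : V, HasSum (fun p : V × V => if p.2 = v₀ then ξ p.1 p.2 * f p.2 else 0)
        (ν v₀ * f v₀) := by
      intro v₀
      have hi : Function.Injective (fun u : V => ((u, v₀) : V × V)) := by
        intro a b hab; simpa using congrArg Prod.fst hab
      have hvanish : ∀ p : V × V, p ∉ Set.range (fun u : V => ((u, v₀) : V × V)) →
          (if p.2 = v₀ then ξ p.1 p.2 * f p.2 else 0) = 0 := by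
        rintro ⟨a, b⟩ hp
        have hb : b ≠ v₀ := fun hb => hp ⟨a, by rw [hb]⟩
        simp [hb]
      apply (Function.Injective.hasSum_iff hi hvanish).mp
      have e : ((fun p : V × V => if p.2 = v₀ then ξ p.1 p.2 * f p.2 else 0) ∘
          (fun u : V => ((u, v₀) : V × V))) = fun u => ξ u v₀ * f v₀ := by
        funext u; simp
      rw [e]
      exact (colHasSum v₀).mul_right (f v₀)
    have hSfib : ∀ u₀ : V, HasSum (fun p : V × V => if p.1 = u₀ then ξ p.1 p.2 * f p.1 else 0)
        (μ u₀ * f u₀) := by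
      intro u₀
      have hi : Function.Injective (fun v : V => ((u₀, v) : V × V)) := by
        intro a b hab; simpa using congrArg Prod.snd hab
      have hvanish : ∀ p : V × V, p ∉ Set.range (fun v : V => ((u₀, v) : V × V)) →
          (if p.1 = u₀ then ξ p.1 p.2 * f p.1 else 0) = 0 := by
        rintro ⟨a, b⟩ hp
        have ha : a ≠ u₀ := fun ha => hp ⟨b, by rw [ha]⟩
        simp [ha]
      apply (Function.Injective.hasSum_iff hi hvanish).mp
      have e : ((fun p : V × V => if p.1 = u₀ then ξ p.1 p.2 * f p.1 else 0) ∘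
          (fun v : V => ((u₀, v) : V × V))) = fun v => ξ u₀ v * f u₀ := by
        funext v; simp
      rw [e]
      exact (rowHasSum u₀).mul_right (f u₀)
    have hkeyT : (fun p : V × V => ξ p.1 p.2 * f p.2) = fun p =>
        (if p.2 = x then ξ p.1 p.2 * f p.2 else 0) +
        ((if p.2 = x' then ξ p.1 p.2 * f p.2 else 0) +
        ((if p.2 = z1 then ξ p.1 p.2 * f p.2 else 0) +
        (if p.2 = z2 then ξ p.1 p.2 * f p.2 else 0))) := by
      funext p
      by_cases h1 : p.2 = x
      · simp [h1, hxne, hzx1, hzx2]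
      · by_cases h2 : p.2 = x'
        · simp [h2, Ne.symm hxne, hx'z1ne, hx'z2ne]
        · by_cases h3 : p.2 = z1
          · simp [h3, hz1x, Ne.symm hx'z1ne, hz12]
          · by_cases h4 : p.2 = z2
            · simp [h4, hz2x, Ne.symm hx'z2ne, Ne.symm hz12]
            · rw [colzero p.2 (hν0 p.2 h1 h2 h3 h4) p.1]
              simp [h1, h2, h3, h4]
    have hkeyS : (fun p : V × V => ξ p.1 p.2 * f p.1) = fun p =>
        (if p.1 = x then ξ p.1 p.2 * f p.1 else 0) +
        ((if p.1 = x' then ξ p.1 p.2 * f p.1 else 0) +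
        ((if p.1 = y1 then ξ p.1 p.2 * f p.1 else 0) +
        (if p.1 = y2 then ξ p.1 p.2 * f p.1 else 0))) := by
      funext p
      by_cases h1 : p.1 = x
      · simp [h1, hxne, hxy1ne, hxy2ne]
      · by_cases h2 : p.1 = x'
        · simp [h2, Ne.symm hxne, Ne.symm hy1x', Ne.symm hy2x']
        · by_cases h3 : p.1 = y1
          · simp [h3, Ne.symm hxy1ne, hy1x', hy12]
          · by_cases h4 : p.1 = y2
            · simp [h4, Ne.symm hxy2ne, hy2x', Ne.symm hy12]
            · rw [rowzero p.1 (hμ0 p.1 h1 h2 h3 h4) p.2]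
              simp [h1, h2, h3, h4]
    have H_T : HasSum (fun p : V × V => ξ p.1 p.2 * f p.2)
        (ν x * f x + (ν x' * f x' + (ν z1 * f z1 + ν z2 * f z2))) := by
      rw [hkeyT]
      exact (hTfib x).add ((hTfib x').add ((hTfib z1).add (hTfib z2)))
    have H_S : HasSum (fun p : V × V => ξ p.1 p.2 * f p.1)
        (μ x * f x + (μ x' * f x' + (μ y1 * f y1 + μ y2 * f y2))) := by
      rw [hkeyS]
      exact (hSfib x).add ((hSfib x').add ((hSfib y1).add (hSfib y2)))
    have Hdiff := hcost.sub (H_T.sub H_S)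
    have hle := hasSum_le (f := fun _ : V × V => (0:ℝ))
      (g := fun p : V × V => ξ p.1 p.2 * graphDist G p.1 p.2 -
        (ξ p.1 p.2 * f p.2 - ξ p.1 p.2 * f p.1))
      (fun p => by
        have h1 := hlip p.1 p.2
        have h2 := hξnn p.1 p.2
        show (0:ℝ) ≤ ξ p.1 p.2 * graphDist G p.1 p.2 -
          (ξ p.1 p.2 * f p.2 - ξ p.1 p.2 * f p.1)
        nlinarith [mul_nonneg h2 (by linarith : (0:ℝ) ≤ graphDist G p.1 p.2 - (f p.2 - f p.1))])
      hasSum_zero Hdiff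
    rw [hμx, hμx', hμy1, hμy2, hνx, hνx', hνz1, hνz2, hfx, hfx', hfy1, hfy2, hfz1, hfz2] at hle
    linarith
  have hW : W1 (graphDist G) μ ν = 1 + 2/3 * t := by
    have hmem : (1 + 2/3 * t) ∈ {c | ∃ ξ, IsCoupling μ ν ξ ∧
        HasSum (fun p : V × V => ξ p.1 p.2 * graphDist G p.1 p.2) c} :=
      ⟨ξ₀, ⟨hξ₀nn, fun u => (hξ₀row u).tsum_eq, fun v => (hξ₀col v).tsum_eq⟩, hξ₀cost⟩
    rw [W1]
    exact le_antisymm (csInf_le ⟨1 + 2/3 * t, fun c hc => hlow c hc⟩ hmem)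
      (le_csInf ⟨1 + 2/3 * t, hmem⟩ hlow)
  rw [kappa, ← hμdef, ← hνdef, hW, hρxx', div_one]
  ring
end Generic

lemma hex_adj_iff' (a b c d : ℤ) : hexGraph.Adj (a, b) (c, d) ↔
    ((b = d ∧ (a = c + 1 ∨ c = a + 1)) ∨
      (a = c ∧ ((a + b) % 2 = 0 ∧ d = b + 1 ∨ (c + d) % 2 = 0 ∧ b = d + 1))) := by
  rw [hex_adj]; simp [Int.even_iff]

lemma hex_kappa (x x' y1 y2 z1 z2 : ℤ × ℤ)
    (hxx' : hexGraph.Adj x x')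
    (hNx : {y | hexGraph.Adj x y} = {x', y1, y2})
    (hNx' : {y | hexGraph.Adj x' y} = {x, z1, z2})
    (hy12 : y1 ≠ y2) (hz12 : z1 ≠ z2)
    (hy1x' : y1 ≠ x') (hy2x' : y2 ≠ x')
    (hz1x : z1 ≠ x) (hz2x : z2 ≠ x)
    (n11 : ¬ hexGraph.Adj y1 z1) (n12 : ¬ hexGraph.Adj y1 z2)
    (n21 : ¬ hexGraph.Adj y2 z1) (n22 : ¬ hexGraph.Adj y2 z2)
    {t : ℝ} (ht0 : 0 < t) (ht1 : t ≤ 3/4) :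
    kappa hexGraph t x x' = -(2/3) * t := by
  have hxy1 : hexGraph.Adj x y1 := by
    have : y1 ∈ {y | hexGraph.Adj x y} := by rw [hNx]; simp
    exact this
  have hxy2 : hexGraph.Adj x y2 := by
    have : y2 ∈ {y | hexGraph.Adj x y} := by rw [hNx]; simp
    exact this
  have hx'z1 : hexGraph.Adj x' z1 := by
    have : z1 ∈ {y | hexGraph.Adj x' y} := by rw [hNx']; simp
    exact this
  have hx'z2 : hexGraph.Adj x' z2 := by
    have : z2 ∈ {y | hexGraph.Adj x' y} := by rw [hNx']; simp
    exact this
  exact kappa_edge hexGraph hex_connected x x' y1 y2 z1 z2 hxx' hNx hNx' hy12 hz12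
    hy1x' hy2x' hz1x hz2x
    (hex_dist_eq_two hy1x' x hxy1.symm hxx')
    (hex_dist_eq_two hy2x' x hxy2.symm hxx')
    (hex_dist_eq_three n11 x x' hxy1.symm hxx' hx'z1)
    (hex_dist_eq_three n12 x x' hxy1.symm hxx' hx'z2)
    (hex_dist_eq_three n21 x x' hxy2.symm hxx' hx'z1)
    (hex_dist_eq_three n22 x x' hxy2.symm hxx' hx'z2)
    (hex_deg x) (hex_deg x') ht0 ht1


set_option maxHeartbeats 2000000 in
/-- on the hexagonal tiling graph, the Ollivier–Ricci curvature
of every edge equals `−2/3`. -/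
theorem hexagonal_ric (x x' : ℤ × ℤ) (h : hexGraph.Adj x x') :
    Filter.Tendsto (fun t => kappa hexGraph t x x' / t)
      (nhdsWithin 0 (Set.Ioi 0)) (nhds (-2/3)) := by

  have key : ∀ t : ℝ, 0 < t → t ≤ 3/4 → kappa hexGraph t x x' = -(2/3) * t := by
    intro t ht0 ht1
    have hA := h
    obtain ⟨i, j⟩ := x
    obtain ⟨i', j'⟩ := x'
    rcases hA with ⟨h1, h2 | h2⟩ | ⟨h1, ⟨h2, h3⟩ | ⟨h2, h3⟩⟩
    · have hj : j = j' := h1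
      have hi : i = i' + 1 := h2
      by_cases hp : (i + j) % 2 = 0
      · exact hex_kappa (i, j) (i', j') (i+1, j) (i, j+1) (i'-1, j') (i', j'-1) h
          (by ext ⟨a, b⟩
              rw [Set.mem_setOf_eq, hex_adj_iff']
              simp only [Set.mem_insert_iff, Set.mem_singleton_iff, Prod.mk.injEq]; omega)
          (by ext ⟨a, b⟩
              rw [Set.mem_setOf_eq, hex_adj_iff']
              simp only [Set.mem_insert_iff, Set.mem_singleton_iff, Prod.mk.injEq]; omega)
          (by intro e; rw [Prod.mk.injEq] at e; omega)
          (by intro e; rw [Prod.mk.injEq] at e; omega)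
          (by intro e; rw [Prod.mk.injEq] at e; omega)
          (by intro e; rw [Prod.mk.injEq] at e; omega)
          (by intro e; rw [Prod.mk.injEq] at e; omega)
          (by intro e; rw [Prod.mk.injEq] at e; omega)
          (by rw [hex_adj_iff']; omega) (by rw [hex_adj_iff']; omega)
          (by rw [hex_adj_iff']; omega) (by rw [hex_adj_iff']; omega) ht0 ht1
      · exact hex_kappa (i, j) (i', j') (i+1, j) (i, j-1) (i'-1, j') (i', j'+1) h
          (by ext ⟨a, b⟩
              rw [Set.mem_setOf_eq, hex_adj_iff']
              simp only [Set.mem_insert_iff, Set.mem_singleton_iff, Prod.mk.injEq]; omega)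
          (by ext ⟨a, b⟩
              rw [Set.mem_setOf_eq, hex_adj_iff']
              simp only [Set.mem_insert_iff, Set.mem_singleton_iff, Prod.mk.injEq]; omega)
          (by intro e; rw [Prod.mk.injEq] at e; omega)
          (by intro e; rw [Prod.mk.injEq] at e; omega)
          (by intro e; rw [Prod.mk.injEq] at e; omega)
          (by intro e; rw [Prod.mk.injEq] at e; omega)
          (by intro e; rw [Prod.mk.injEq] at e; omega)
          (by intro e; rw [Prod.mk.injEq] at e; omega)
          (by rw [hex_adj_iff']; omega) (by rw [hex_adj_iff']; omega)
          (by rw [hex_adj_iff']; omega) (by rw [hex_adj_iff']; omega) ht0 ht1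
    · have hj : j = j' := h1
      have hi : i' = i + 1 := h2
      by_cases hp : (i + j) % 2 = 0
      · exact hex_kappa (i, j) (i', j') (i-1, j) (i, j+1) (i'+1, j') (i', j'-1) h
          (by ext ⟨a, b⟩
              rw [Set.mem_setOf_eq, hex_adj_iff']
              simp only [Set.mem_insert_iff, Set.mem_singleton_iff, Prod.mk.injEq]; omega)
          (by ext ⟨a, b⟩
              rw [Set.mem_setOf_eq, hex_adj_iff']
              simp only [Set.mem_insert_iff, Set.mem_singleton_iff, Prod.mk.injEq]; omega)
          (by intro e; rw [Prod.mk.injEq] at e; omega)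
          (by intro e; rw [Prod.mk.injEq] at e; omega)
          (by intro e; rw [Prod.mk.injEq] at e; omega)
          (by intro e; rw [Prod.mk.injEq] at e; omega)
          (by intro e; rw [Prod.mk.injEq] at e; omega)
          (by intro e; rw [Prod.mk.injEq] at e; omega)
          (by rw [hex_adj_iff']; omega) (by rw [hex_adj_iff']; omega)
          (by rw [hex_adj_iff']; omega) (by rw [hex_adj_iff']; omega) ht0 ht1
      · exact hex_kappa (i, j) (i', j') (i-1, j) (i, j-1) (i'+1, j') (i', j'+1) h
          (by ext ⟨a, b⟩
              rw [Set.mem_setOf_eq, hex_adj_iff']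
              simp only [Set.mem_insert_iff, Set.mem_singleton_iff, Prod.mk.injEq]; omega)
          (by ext ⟨a, b⟩
              rw [Set.mem_setOf_eq, hex_adj_iff']
              simp only [Set.mem_insert_iff, Set.mem_singleton_iff, Prod.mk.injEq]; omega)
          (by intro e; rw [Prod.mk.injEq] at e; omega)
          (by intro e; rw [Prod.mk.injEq] at e; omega)
          (by intro e; rw [Prod.mk.injEq] at e; omega)
          (by intro e; rw [Prod.mk.injEq] at e; omega)
          (by intro e; rw [Prod.mk.injEq] at e; omega)
          (by intro e; rw [Prod.mk.injEq] at e; omega)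
          (by rw [hex_adj_iff']; omega) (by rw [hex_adj_iff']; omega)
          (by rw [hex_adj_iff']; omega) (by rw [hex_adj_iff']; omega) ht0 ht1
    · have hi : i = i' := h1
      have hj : j' = j + 1 := h3
      have hp : (i + j) % 2 = 0 := Int.even_iff.mp h2
      exact hex_kappa (i, j) (i', j') (i+1, j) (i-1, j) (i'+1, j') (i'-1, j') h
          (by ext ⟨a, b⟩
              rw [Set.mem_setOf_eq, hex_adj_iff']
              simp only [Set.mem_insert_iff, Set.mem_singleton_iff, Prod.mk.injEq]; omega)
          (by ext ⟨a, b⟩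
              rw [Set.mem_setOf_eq, hex_adj_iff']
              simp only [Set.mem_insert_iff, Set.mem_singleton_iff, Prod.mk.injEq]; omega)
          (by intro e; rw [Prod.mk.injEq] at e; omega)
          (by intro e; rw [Prod.mk.injEq] at e; omega)
          (by intro e; rw [Prod.mk.injEq] at e; omega)
          (by intro e; rw [Prod.mk.injEq] at e; omega)
          (by intro e; rw [Prod.mk.injEq] at e; omega)
          (by intro e; rw [Prod.mk.injEq] at e; omega)
          (by rw [hex_adj_iff']; omega) (by rw [hex_adj_iff']; omega)
          (by rw [hex_adj_iff']; omega) (by rw [hex_adj_iff']; omega) ht0 ht1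
    · have hi : i = i' := h1
      have hj : j = j' + 1 := h3
      have hp : (i' + j') % 2 = 0 := Int.even_iff.mp h2
      exact hex_kappa (i, j) (i', j') (i+1, j) (i-1, j) (i'+1, j') (i'-1, j') h
          (by ext ⟨a, b⟩
              rw [Set.mem_setOf_eq, hex_adj_iff']
              simp only [Set.mem_insert_iff, Set.mem_singleton_iff, Prod.mk.injEq]; omega)
          (by ext ⟨a, b⟩
              rw [Set.mem_setOf_eq, hex_adj_iff']
              simp only [Set.mem_insert_iff, Set.mem_singleton_iff, Prod.mk.injEq]; omega)
          (by intro e; rw [Prod.mk.injEq] at e; omega)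
          (by intro e; rw [Prod.mk.injEq] at e; omega)
          (by intro e; rw [Prod.mk.injEq] at e; omega)
          (by intro e; rw [Prod.mk.injEq] at e; omega)
          (by intro e; rw [Prod.mk.injEq] at e; omega)
          (by intro e; rw [Prod.mk.injEq] at e; omega)
          (by rw [hex_adj_iff']; omega) (by rw [hex_adj_iff']; omega)
          (by rw [hex_adj_iff']; omega) (by rw [hex_adj_iff']; omega) ht0 ht1
  have heq : ∀ᶠ t in nhdsWithin 0 (Set.Ioi 0),
      kappa hexGraph t x x' / t = -2/3 := by
    filter_upwards [Ioo_mem_nhdsGT_of_mem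
      (by norm_num : (0:ℝ) ∈ Set.Ico (0:ℝ) (3/4))] with t ht
    obtain ⟨ht0, ht1⟩ := ht
    rw [key t ht0 (le_of_lt ht1)]
    field_simp
  have heq' : (fun t => kappa hexGraph t x x' / t) =ᶠ[nhdsWithin 0 (Set.Ioi 0)]
      (fun _ => -2/3) := heq
  exact Filter.Tendsto.congr' heq'.symm tendsto_const_nhds
end
end
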